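/- Let H be a numerical semigroup with multiplicity e = min(H \ {0}) and genus g = #(ℕ \ H). If e < g + 1 and H has maximal embedding dimension (embedding dimension equal to e), then H has a minimal generator n with n > 2e. Contrapositive form: if every minimal generator of a maximal-embedding-dimension numerical semigroup H lies in the interval [e, 2e], then g ≤ e − 1, and in that case H = {0, g+1, g+2, …}. -/
import Mathlib


/-- A numerical semigroup: a subset of `ℕ` containing `0`, closed under addition,
with finite complement. -/
def IsNumericalSemigroup (H : Set ℕ) : Prop :=
  0 ∈ H ∧ (∀ a ∈ H, ∀ b ∈ H, a + b ∈ H) ∧ (Hᶜ).Finite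

/-- The copy of `H` inside `ℤ`. -/
def NS.Z (H : Set ℕ) : Set ℤ := (fun n : ℕ => (n : ℤ)) '' H

/-- The genus `g(H)`: the number of gaps of `H`. -/
noncomputable def NS.gaps (H : Set ℕ) : ℕ := (Hᶜ).ncard

/-- The Frobenius number `F(H) = max {n ∈ ℤ | n ∉ H}`. -/
noncomputable def NS.frob (H : Set ℕ) : ℤ := sSup ((NS.Z H)ᶜ)

/-- The type `t(H) = #{n ∈ ℤ \ H | n + h ∈ H for all h ∈ H with h > 0}`. -/
noncomputable def NS.typ (H : Set ℕ) : ℕ :=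
  {n : ℤ | n ∉ NS.Z H ∧ ∀ h ∈ H, 0 < h → n + (h : ℤ) ∈ NS.Z H}.ncard

/-- The numerical semigroup generated by `3, 4, 5`. -/
def H345 : Set ℕ := {n : ℕ | ∃ a b c : ℕ, n = 3 * a + 4 * b + 5 * c}

/-- The multiplicity `e(H)`: the least positive element of `H`. -/
noncomputable def NS.mult (H : Set ℕ) : ℕ := sInf {n : ℕ | n ∈ H ∧ 0 < n}

/-- The set of minimal generators of `H`: positive elements of `H` which are not sums of two
positive elements of `H`. -/
def NS.minGens (H : Set ℕ) : Set ℕ :=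
  {n : ℕ | n ∈ H ∧ 0 < n ∧ ¬ ∃ a ∈ H, ∃ b ∈ H, 0 < a ∧ 0 < b ∧ n = a + b}

/-- The embedding dimension of `H`: the number of minimal generators. -/
noncomputable def NS.embdim (H : Set ℕ) : ℕ := (NS.minGens H).ncard

lemma NS.core (H : Set ℕ) (hH : IsNumericalSemigroup H)
    (hmed : NS.embdim H = NS.mult H)
    (hle : ∀ n ∈ NS.minGens H, n ≤ 2 * NS.mult H) :
    0 < NS.mult H ∧ H = insert 0 {n : ℕ | NS.mult H ≤ n} ∧
      NS.gaps H = NS.mult H - 1 := by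
  obtain ⟨h0, hadd, hfin⟩ := hH
  set e := NS.mult H with he
  have hinf : H.Infinite := by simpa using hfin.infinite_compl
  obtain ⟨m, hmH, hmpos⟩ : ∃ m ∈ H, 0 < m := by
    obtain ⟨m, hm1, hm2⟩ := hinf.exists_gt 0
    exact ⟨m, hm1, hm2⟩
  have hne : {n : ℕ | n ∈ H ∧ 0 < n}.Nonempty := ⟨m, hmH, hmpos⟩
  have heH : e ∈ H := (Nat.sInf_mem hne).1
  have hepos : 0 < e := (Nat.sInf_mem hne).2
  have hemin : ∀ n ∈ H, 0 < n → e ≤ n := fun n hn hp => Nat.sInf_le ⟨hn, hp⟩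
  have hmul : ∀ k : ℕ, k * e ∈ H := by
    intro k
    induction k with
    | zero => simpa using h0
    | succ k ih => simpa [Nat.succ_mul] using hadd _ ih _ heH
  obtain ⟨B, hB⟩ := hfin.bddAbove
  have hcond : ∀ n, B + 1 ≤ n → n ∈ H := by
    intro n hn
    by_contra hc
    exact absurd (hB hc) (by omega)
  have hsub : NS.minGens H ⊆ Set.Iio (B + 1 + e + 1) := by
    intro n hn
    by_contra h'
    have h'' : B + 1 + e + 1 ≤ n := by simpa using h'
    have h1 : n - e ∈ H := hcond _ (by omega)
    exact hn.2.2 ⟨e, heH, n - e, h1, hepos, by omega, by omega⟩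
  have hfinG : (NS.minGens H).Finite := (Set.finite_Iio _).subset hsub
  have hinjOn : Set.InjOn (fun n => n % e) (NS.minGens H) := by
    have key : ∀ a ∈ NS.minGens H, ∀ b ∈ NS.minGens H,
        a % e = b % e → a < b → False := by
      intro a ha b hb hab hlt
      have hdvd : e ∣ b - a := (Nat.modEq_iff_dvd' hlt.le).mp hab
      obtain ⟨k, hk⟩ := hdvd
      have hba : b - a ∈ H := by
        rw [hk, mul_comm]; exact hmul k
      exact hb.2.2 ⟨a, ha.1, b - a, hba, ha.2.1, by omega, by omega⟩
    intro a ha b hb hab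
    rcases lt_trichotomy a b with h | h | h
    · exact absurd (key a ha b hb hab h) (by simp)
    · exact h
    · exact absurd (key b hb a ha hab.symm h) (by simp)
  have himg : (fun n => n % e) '' (NS.minGens H) = Set.Iio e := by
    apply Set.eq_of_subset_of_ncard_le
    · rintro _ ⟨n, hn, rfl⟩
      exact Nat.mod_lt _ hepos
    · have h1 : (Set.Iio e).ncard = e := by
        rw [← Finset.coe_Iio, Set.ncard_coe_finset, Nat.card_Iio]
      rw [h1, Set.ncard_image_of_injOn hinjOn]
      exact le_of_eq hmed.symm
    · exact Set.finite_Iio _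
  have hkey : ∀ i < e, e + i ∈ H := by
    intro i hi
    have hmem : i ∈ Set.Iio e := hi
    rw [← himg] at hmem
    obtain ⟨n, hn, hmod0⟩ := hmem
    have hmod : n % e = i := hmod0
    have h1 : e ≤ n := hemin n hn.1 hn.2.1
    have h2 : n ≤ 2 * e := hle n hn
    rcases eq_or_lt_of_le h2 with h2 | h2
    · have hi0 : i = 0 := by
        rw [← hmod, h2, Nat.mul_mod_left]
      rw [hi0]
      simpa using heH
    · have hmod2 : n % e = n - e := by
        rw [Nat.mod_eq_sub_mod h1, Nat.mod_eq_of_lt (by omega)]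
      have : n = e + i := by omega
      rw [← this]
      exact hn.1
  have hall : ∀ n, e ≤ n → n ∈ H := by
    intro n
    induction n using Nat.strong_induction_on with
    | _ n ih =>
      intro hn
      by_cases h2 : n < 2 * e
      · have h3 := hkey (n - e) (by omega)
        have h4 : e + (n - e) = n := by omega
        rwa [h4] at h3
      · have h1 : n - e ∈ H := ih (n - e) (by omega) (by omega)
        have h3 := hadd _ h1 _ heH
        have h4 : n - e + e = n := by omega
        rwa [h4] at h3
  have hHeq : H = insert 0 {n : ℕ | e ≤ n} := by
    ext n
    simp only [Set.mem_insert_iff, Set.mem_setOf_eq]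
    constructor
    · intro hn
      rcases Nat.eq_zero_or_pos n with h | h
      · exact Or.inl h
      · exact Or.inr (hemin n hn h)
    · rintro (rfl | h)
      · exact h0
      · exact hall n h
  refine ⟨hepos, hHeq, ?_⟩
  have hcompl : Hᶜ = Set.Ioo 0 e := by
    rw [hHeq]
    ext n
    simp only [Set.mem_compl_iff, Set.mem_insert_iff, Set.mem_setOf_eq, Set.mem_Ioo]
    omega
  rw [NS.gaps, hcompl, ← Finset.coe_Ioo, Set.ncard_coe_finset, Nat.card_Ioo]
  omega

/-- Let `H` be a numerical semigroup of maximal embedding dimension (`embdim H = e`),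
with multiplicity `e` and genus `g`. If `e < g + 1` then `H` has a minimal generator `n > 2e`.
Contrapositive form: if every minimal generator lies in `[e, 2e]`, then `g ≤ e − 1`, and in
that case `H = {0, g+1, g+2, …}`. -/
theorem stmt_19 (H : Set ℕ) (hH : IsNumericalSemigroup H)
    (hmed : NS.embdim H = NS.mult H) :
    (NS.mult H < NS.gaps H + 1 → ∃ n ∈ NS.minGens H, 2 * NS.mult H < n) ∧
    ((∀ n ∈ NS.minGens H, NS.mult H ≤ n ∧ n ≤ 2 * NS.mult H) →
      NS.gaps H ≤ NS.mult H - 1 ∧ H = insert 0 {n : ℕ | NS.gaps H + 1 ≤ n}) := by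
  constructor
  · intro hlt
    by_contra hc
    push_neg at hc
    obtain ⟨hepos, _, hg⟩ := NS.core H hH hmed (fun n hn => hc n hn)
    omega
  · intro hbound
    obtain ⟨hepos, hHeq, hg⟩ := NS.core H hH hmed (fun n hn => (hbound n hn).2)
    refine ⟨by omega, ?_⟩
    have h1 : NS.gaps H + 1 = NS.mult H := by omega
    rw [h1]
    exact hHeq
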